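/- If an n-ary power decomposition operation f (with coordinate shift g) exists on a set A with |A| ≥ 2, then f depends on each of its n coordinates, i.e., for each i there exist tuples differing only in coordinate i on which f takes different values. -/

import Mathlib

/-- An `n`-ary power decomposition operation on a set with at least two elements depends on
each of its coordinates. -/
theorem power_decomposition_depends
    (A : Type) (n : ℕ) [NeZero n] (f : (Fin n → A) → A) (g : A → A)
    (hA : ∃ x y : A, x ≠ y)
    (h1 : ∀ x : A, f (fun _ => x) = x)
    (h2 : ∀ x : Fin n → Fin n → A, f (fun i => f (x i)) = f (fun i => x i i))
    (hg1 : ∀ x : A, g^[n] x = x)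
    (hg2 : ∀ x : Fin n → A, g (f x) = f (fun k => g (x (k + 1)))) :
    ∀ i : Fin n, ∃ (c : Fin n → A) (a b : A),
      f (Function.update c i a) ≠ f (Function.update c i b) := by
  intro i
  by_contra hcon
  push_neg at hcon
  have npos : 0 < n := Nat.pos_of_ne_zero (NeZero.ne n)
  have ginj : Function.Injective g := by
    have hli : Function.LeftInverse (g^[n-1]) g := by
      intro x
      have h := hg1 x
      rwa [← Nat.succ_pred_eq_of_pos npos, Function.iterate_succ_apply] at h
    exact hli.injective
  have step : ∀ j : Fin n,
      (∀ c a b, f (Function.update c j a) = f (Function.update c j b)) →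
      ∀ c a b, f (Function.update c (j+1) a) = f (Function.update c (j+1) b) := by
    intro j hj c a b
    apply ginj
    rw [hg2, hg2]
    have key : ∀ v : A, (fun k => g (Function.update c (j+1) v (k+1))) =
        Function.update (fun k => g (c (k+1))) j (g v) := by
      intro v
      funext k
      rcases eq_or_ne k j with rfl | hk
      · simp
      · rw [Function.update_of_ne hk,
          Function.update_of_ne (fun h => hk (add_right_cancel h))]
    rw [key a, key b, hj]
  open Fin.NatCast in
  have allP : ∀ j : Fin n, ∀ c a b,
      f (Function.update c j a) = f (Function.update c j b) := by
    have aux : ∀ m : ℕ, ∀ c a b,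
        f (Function.update c (i + (m : Fin n)) a) =
        f (Function.update c (i + (m : Fin n)) b) := by
      intro m
      induction m with
      | zero => simpa using hcon
      | succ m ih =>
          have h := step (i + (m : Fin n)) ih
          intro c a b
          have hc : ((m+1 : ℕ) : Fin n) = (m : Fin n) + 1 := by push_cast; ring
          rw [hc, ← add_assoc]
          exact h c a b
    intro j
    have hj : i + (((j - i : Fin n) : ℕ) : Fin n) = j := by
      rw [Fin.cast_val_eq_self, add_comm]
      exact sub_add_cancel j i
    have := aux ((j - i : Fin n) : ℕ)
    rwa [hj] at this
  obtain ⟨x, y, hxy⟩ := hA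
  apply hxy
  have main : ∀ m : ℕ, m ≤ n →
      f (fun k : Fin n => if (k : ℕ) < m then y else x) = x := by
    intro m
    induction m with
    | zero => intro _; simpa using h1 x
    | succ m ih =>
        intro hm
        have hmn : m < n := hm
        set c : Fin n → A := fun k => if (k : ℕ) < m then y else x with hc
        have e1 : (fun k : Fin n => if (k : ℕ) < m + 1 then y else x) =
            Function.update c ⟨m, hmn⟩ y := by
          funext k
          rcases eq_or_ne k ⟨m, hmn⟩ with rfl | hk
          · simp
          · rw [Function.update_of_ne hk]
            have hne : (k : ℕ) ≠ m := fun h => hk (Fin.ext h)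
            have : ((k:ℕ) < m + 1) ↔ ((k:ℕ) < m) := by omega
            simp only [hc, this]
        have e2 : c = Function.update c ⟨m, hmn⟩ x := by
          funext k
          rcases eq_or_ne k ⟨m, hmn⟩ with rfl | hk
          · simp [hc]
          · rw [Function.update_of_ne hk]
        calc f (fun k : Fin n => if (k:ℕ) < m+1 then y else x)
            = f (Function.update c ⟨m, hmn⟩ y) := by rw [e1]
          _ = f (Function.update c ⟨m, hmn⟩ x) := allP _ _ _ _
          _ = f c := by rw [← e2]
          _ = x := ih (le_of_lt hmn)
  have hx := main n le_rfl
  have hfy : (fun k : Fin n => if (k:ℕ) < n then y else x) = fun _ => y := by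
    funext k; simp [k.isLt]
  rw [hfy, h1] at hx
  exact hx.symm
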